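/- Let α > 0, δ ∈ (0, α), let g : (0,∞) → ℝ satisfy: g and g' are absolutely continuous and summable on (0,∞); g ≥ 0 and g' ≤ 0 on (0,∞); and (α − δ) g'(s) − g''(s) ≤ 0 for a.e. s > 0. Let E be a real Hilbert space and let η : (0,∞) → E be locally absolutely continuous with η(s) → 0 as s → 0⁺, ∫₀^∞ −g'(s) ‖η(s)‖² ds < ∞ and ∫₀^∞ −g'(s) ‖η'(s)‖² ds < ∞. Then lim_{N→∞} g'(N) ‖η(N)‖² = 0. -/

import Mathlib

open MeasureTheory Filter Topology

lemma aux_cont (g' g'' : ℝ → ℝ)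
    (hg''loc : ∀ a b : ℝ, 0 < a → a ≤ b → IntervalIntegrable g'' MeasureTheory.volume a b)
    (hFTCg' : ∀ a b : ℝ, 0 < a → a ≤ b → g' b - g' a = ∫ y in a..b, g'' y) :
    ∀ x ∈ Set.Ioi (0 : ℝ), ContinuousAt g' x := by
  intro x hx
  have hx0 : (0:ℝ) < x := hx
  set a := x / 2 with ha_def
  have ha : 0 < a := by positivity
  have hax : a < x := by simp only [ha_def]; linarith
  have hab : a ≤ x + 1 := by linarith
  have hint : IntegrableOn g'' (Set.Icc a (x + 1)) := by
    have := hg''loc a (x + 1) ha hab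
    rwa [intervalIntegrable_iff_integrableOn_Icc_of_le hab] at this
  have hcont : ContinuousOn (fun t => g' a + ∫ y in a..t, g'' y) (Set.Icc a (x + 1)) := by
    apply continuousOn_const.add
    have := intervalIntegral.continuousOn_primitive_interval
      (f := g'') (μ := volume) (a := a) (b := x + 1) (by rwa [Set.uIcc_of_le hab])
    rwa [Set.uIcc_of_le hab] at this
  have heq : Set.EqOn g' (fun t => g' a + ∫ y in a..t, g'' y) (Set.Icc a (x + 1)) := by
    intro t ht
    have := hFTCg' a t ha ht.1
    simp only
    linarith
  exact (hcont.congr heq).continuousAt (Icc_mem_nhds hax (by linarith))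

lemma aux_gronwall (c : ℝ) (hc : 0 < c) (g' g'' : ℝ → ℝ)
    (hg''loc : ∀ a b : ℝ, 0 < a → a ≤ b → IntervalIntegrable g'' MeasureTheory.volume a b)
    (hFTCg' : ∀ a b : ℝ, 0 < a → a ≤ b → g' b - g' a = ∫ y in a..b, g'' y)
    (hg3 : ∀ᵐ s : ℝ, s ∈ Set.Ioi (0 : ℝ) → c * g' s - g'' s ≤ 0)
    {a b : ℝ} (ha : 0 < a) (hab : a ≤ b) :
    -g' b ≤ (-g' a) * Real.exp (c * (b - a)) := by
  have hcontAt : ∀ x ∈ Set.Ioi (0 : ℝ), ContinuousAt g' x := aux_cont g' g'' hg''loc hFTCg'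
  set u : ℝ → ℝ := fun t => -g' t with hu_def
  have hucontOn : ContinuousOn u (Set.Ioi 0) :=
    fun x hx => ((hcontAt x hx).neg).continuousWithinAt
  have hIccsub : Set.Icc a b ⊆ Set.Ioi (0:ℝ) := fun t ht => lt_of_lt_of_le ha ht.1
  have hucontIcc : ContinuousOn u (Set.Icc a b) := hucontOn.mono hIccsub
  have huint : ∀ t ∈ Set.Icc a b, IntervalIntegrable u volume a t := by
    intro t ht
    apply ContinuousOn.intervalIntegrable
    apply hucontIcc.mono
    rw [Set.uIcc_of_le ht.1]
    exact Set.Icc_subset_Icc le_rfl ht.2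
  set φ : ℝ → ℝ := fun t => u a + c * ∫ τ in a..t, u τ with hφ_def
  -- φ has derivative c * u t at interior points
  have hφderiv : ∀ t ∈ Set.Ioo a b, HasDerivAt φ (c * u t) t := by
    intro t ht
    have h1 : HasDerivAt (fun x => ∫ τ in a..x, u τ) (u t) t := by
      apply intervalIntegral.integral_hasDerivAt_right (huint t ⟨ht.1.le, ht.2.le⟩)
      · exact ContinuousOn.stronglyMeasurableAtFilter isOpen_Ioi hucontOn t
          (hIccsub ⟨ht.1.le, ht.2.le⟩)
      · exact (hcontAt t (hIccsub ⟨ht.1.le, ht.2.le⟩)).neg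
    simpa [hφ_def] using ((h1.const_mul c).const_add (u a))
  -- u ≤ φ on Icc a b
  have hg'contIcc : ContinuousOn g' (Set.Icc a b) :=
    fun x hx => (hcontAt x (hIccsub hx)).continuousWithinAt
  have hle : ∀ t ∈ Set.Icc a b, u t ≤ φ t := by
    intro t ht
    have hFTC := hFTCg' a t ha ht.1
    have hsub : Set.uIcc a t ⊆ Set.Icc a b := by
      rw [Set.uIcc_of_le ht.1]; exact Set.Icc_subset_Icc le_rfl ht.2
    have hcg'int : IntervalIntegrable (fun y => c * g' y) volume a t :=
      (continuousOn_const.mul (hg'contIcc.mono hsub)).intervalIntegrable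
    have hmono : (∫ y in a..t, c * g' y) ≤ ∫ y in a..t, g'' y := by
      apply intervalIntegral.integral_mono_ae_restrict ht.1 hcg'int (hg''loc a t ha ht.1)
      have : ∀ᵐ s : ℝ, s ∈ Set.Icc a t → c * g' s ≤ g'' s := by
        filter_upwards [hg3] with s hs hst
        have : s ∈ Set.Ioi (0:ℝ) := lt_of_lt_of_le ha hst.1
        linarith [hs this]
      exact (ae_restrict_iff' measurableSet_Icc).2 this
    have hcu : (∫ y in a..t, c * g' y) = -(c * ∫ τ in a..t, u τ) := by
      rw [intervalIntegral.integral_const_mul]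
      have : (∫ τ in a..t, u τ) = ∫ τ in a..t, -g' τ := rfl
      rw [this, intervalIntegral.integral_neg]
      ring
    have hthis := hmono
    rw [hcu] at hthis
    show u t ≤ u a + c * ∫ τ in a..t, u τ
    have h2 : u t = -g' t := rfl
    have h3 : u a = -g' a := rfl
    linarith [hFTC]
  -- ψ antitone
  set ψ : ℝ → ℝ := fun t => φ t * Real.exp (-(c * t)) with hψ_def
  have hψderiv : ∀ t ∈ Set.Ioo a b,
      HasDerivAt ψ (c * u t * Real.exp (-(c * t)) + φ t * (Real.exp (-(c * t)) * -c)) t := by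
    intro t ht
    have he : HasDerivAt (fun t : ℝ => Real.exp (-(c * t))) (Real.exp (-(c * t)) * -c) t := by
      have h1 : HasDerivAt (fun t : ℝ => -(c * t)) (-c) t := by
        have := ((hasDerivAt_id t).const_mul c).neg
        simp only [id, mul_one] at this
        exact this
      exact (Real.hasDerivAt_exp _).comp t h1
    exact (hφderiv t ht).mul he
  have hφcont : ContinuousOn φ (Set.Icc a b) := by
    apply continuousOn_const.add
    apply continuousOn_const.mul
    have := intervalIntegral.continuousOn_primitive_interval (f := u) (μ := volume)
      (a := a) (b := b) (by rw [Set.uIcc_of_le hab]; exact hucontIcc.integrableOn_Icc)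
    rwa [Set.uIcc_of_le hab] at this
  have hψcont : ContinuousOn ψ (Set.Icc a b) :=
    hφcont.mul (Real.continuous_exp.comp ((continuous_const.mul continuous_id).neg)).continuousOn
  have hanti : AntitoneOn ψ (Set.Icc a b) := by
    apply antitoneOn_of_deriv_nonpos (convex_Icc a b) hψcont
    · intro x hx
      rw [interior_Icc] at hx
      exact (hψderiv x hx).differentiableAt.differentiableWithinAt
    · intro x hx
      rw [interior_Icc] at hx
      rw [(hψderiv x hx).deriv]
      have h1 := hle x ⟨hx.1.le, hx.2.le⟩
      have h2 := Real.exp_pos (-(c * x))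
      nlinarith [mul_nonneg (mul_nonneg hc.le h2.le) (sub_nonneg.2 h1)]
  have hψba : ψ b ≤ ψ a :=
    hanti (Set.left_mem_Icc.2 hab) (Set.right_mem_Icc.2 hab) hab
  have hφa : φ a = u a := by simp [hφ_def]
  have hub : u b ≤ φ b := hle b (Set.right_mem_Icc.2 hab)
  have hφb : φ b = ψ b * Real.exp (c * b) := by
    simp only [hψ_def]
    rw [mul_assoc, ← Real.exp_add]
    simp
  have : u b ≤ u a * Real.exp (-(c * a)) * Real.exp (c * b) := by
    rw [hφb] at hub
    calc u b ≤ ψ b * Real.exp (c * b) := hub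
    _ ≤ ψ a * Real.exp (c * b) := by
        exact mul_le_mul_of_nonneg_right hψba (Real.exp_pos _).le
    _ = u a * Real.exp (-(c * a)) * Real.exp (c * b) := by
        simp [hψ_def, hφa]
  calc -g' b = u b := rfl
  _ ≤ u a * Real.exp (-(c * a)) * Real.exp (c * b) := this
  _ = (-g' a) * Real.exp (c * (b - a)) := by
      rw [mul_assoc, ← Real.exp_add]
      simp only [hu_def]
      ring_nf

lemma aux_cs (f : ℝ → ℝ) (s : Set ℝ) (hfin : volume s ≠ ⊤)
    (hf : IntegrableOn f s) (hf2 : IntegrableOn (fun t => f t ^ 2) s) :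
    (∫ t in s, f t) ^ 2 ≤ (volume s).toReal * ∫ t in s, f t ^ 2 := by
  set m : ℝ := (volume s).toReal with hm_def
  set I : ℝ := ∫ t in s, f t with hI_def
  rcases eq_or_ne (volume s) 0 with h0 | h0
  · have : I = 0 := by
      simp [hI_def, Measure.restrict_eq_zero.2 h0]
    simp [this, Measure.restrict_eq_zero.2 h0]
  have hm0 : 0 < m := ENNReal.toReal_pos h0 hfin
  have h0' : 0 ≤ ∫ t in s, (m * f t - I) ^ 2 :=
    integral_nonneg fun t => sq_nonneg _
  have hexp : ∫ t in s, (m * f t - I) ^ 2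
      = m ^ 2 * (∫ t in s, f t ^ 2) - (2 * m * I) * I + I ^ 2 * m := by
    have hfe : (fun t => (m * f t - I) ^ 2)
        = fun t => (m ^ 2 * f t ^ 2 - (2 * m * I) * f t) + I ^ 2 := by
      funext t; ring
    have h1 : Integrable (fun t => m ^ 2 * f t ^ 2 - 2 * m * I * f t) (volume.restrict s) :=
      (hf2.const_mul _).sub (hf.const_mul _)
    have h2 : IntegrableOn (fun _ : ℝ => I ^ 2) s volume :=
      integrableOn_const hfin
    rw [hfe, integral_add h1 h2,
      integral_sub (hf2.const_mul _) (hf.const_mul _), integral_const_mul, integral_const_mul,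
      setIntegral_const]
    simp [hm_def, smul_eq_mul, ← hI_def, mul_comm, Measure.real]
  rw [hexp] at h0'
  nlinarith

/-- the boundary term at infinity in the integration by parts vanishes:
`g'(N) ‖η(N)‖² → 0` as `N → ∞`. -/
theorem mgt_boundary_term_at_infinity
    {E : Type*} [NormedAddCommGroup E] [InnerProductSpace ℝ E] [CompleteSpace E]
    (α δ : ℝ) (hδ : 0 < δ) (hδα : δ < α)
    (g g' g'' : ℝ → ℝ)
    (hgderiv : ∀ s ∈ Set.Ioi (0 : ℝ), HasDerivAt g (g' s) s)
    (hg'deriv : ∀ᵐ s : ℝ, s ∈ Set.Ioi (0 : ℝ) → HasDerivAt g' (g'' s) s)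
    (hg''loc : ∀ a b : ℝ, 0 < a → a ≤ b → IntervalIntegrable g'' MeasureTheory.volume a b)
    (hFTCg' : ∀ a b : ℝ, 0 < a → a ≤ b → g' b - g' a = ∫ y in a..b, g'' y)
    (hg_int : IntegrableOn g (Set.Ioi 0))
    (hg'_int : IntegrableOn g' (Set.Ioi 0))
    (hg_nonneg : ∀ s ∈ Set.Ioi (0 : ℝ), 0 ≤ g s)
    (hg'_nonpos : ∀ s ∈ Set.Ioi (0 : ℝ), g' s ≤ 0)
    (hg3 : ∀ᵐ s : ℝ, s ∈ Set.Ioi (0 : ℝ) → (α - δ) * g' s - g'' s ≤ 0)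
    (η η' : ℝ → E)
    (hηderiv : ∀ᵐ s : ℝ, s ∈ Set.Ioi (0 : ℝ) → HasDerivAt η (η' s) s)
    (hη'loc : ∀ a b : ℝ, 0 < a → a ≤ b → IntervalIntegrable η' MeasureTheory.volume a b)
    (hηFTC : ∀ a b : ℝ, 0 < a → a ≤ b → η b - η a = ∫ y in a..b, η' y)
    (hη0 : Tendsto η (nhdsWithin 0 (Set.Ioi 0)) (nhds 0))
    (hη_int : IntegrableOn (fun s => -g' s * ‖η s‖ ^ 2) (Set.Ioi 0))
    (hη'_int : IntegrableOn (fun s => -g' s * ‖η' s‖ ^ 2) (Set.Ioi 0)) :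
    Tendsto (fun N => g' N * ‖η N‖ ^ 2) atTop (nhds 0) := by
  set c : ℝ := α - δ with hc_def
  have hc : 0 < c := by simp only [hc_def]; linarith
  have hgron : ∀ a b : ℝ, 0 < a → a ≤ b → -g' b ≤ (-g' a) * Real.exp (c * (b - a)) :=
    fun a b ha hab => aux_gronwall c hc g' g'' hg''loc hFTCg' hg3 ha hab
  set G1 : ℝ → ℝ := fun s => -g' s * ‖η s‖ ^ 2 with hG1_def
  set G2 : ℝ → ℝ := fun s => -g' s * ‖η' s‖ ^ 2 with hG2_def
  set A : ℝ → ℝ := fun N => ∫ t in Set.Ioc (N - 1) N, G1 t with hA_def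
  set B : ℝ → ℝ := fun N => ∫ t in Set.Ioc (N - 1) N, G2 t with hB_def
  have hsub1 : Set.Ioi (1:ℝ) ⊆ Set.Ioi (0:ℝ) := Set.Ioi_subset_Ioi (by norm_num)
  have hG1i : IntegrableOn G1 (Set.Ioi 1) := hη_int.mono_set hsub1
  have hG2i : IntegrableOn G2 (Set.Ioi 1) := hη'_int.mono_set hsub1
  -- the set integrals over the moving window tend to zero
  have hwindow : ∀ (G : ℝ → ℝ), IntegrableOn G (Set.Ioi 0) →
      Tendsto (fun N => ∫ t in Set.Ioc (N - 1) N, G t) atTop (𝓝 0) := by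
    intro G hGi
    have hGi1 : IntegrableOn G (Set.Ioi 1) := hGi.mono_set hsub1
    have h1 := MeasureTheory.intervalIntegral_tendsto_integral_Ioi 1 hGi1 tendsto_id
    have h2 := MeasureTheory.intervalIntegral_tendsto_integral_Ioi 1 hGi1
      (tendsto_atTop_add_const_right atTop (-1) tendsto_id)
    have h3 := h1.sub h2
    rw [sub_self] at h3
    apply h3.congr'
    filter_upwards [eventually_ge_atTop (2:ℝ)] with N hN
    have hiI : ∀ M : ℝ, 1 ≤ M → IntervalIntegrable G volume 1 M := by
      intro M hM
      apply IntegrableOn.intervalIntegrable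
      apply hGi.mono_set
      rw [Set.uIcc_of_le hM]
      exact fun t ht => lt_of_lt_of_le (by norm_num) ht.1
    simp only [id_eq]
    rw [show N + -1 = N - 1 by ring,
      intervalIntegral.integral_interval_sub_left (hiI N (by linarith)) (hiI (N-1) (by linarith)),
      intervalIntegral.integral_of_le (by linarith : N - 1 ≤ N)]
  have hlimA : Tendsto A atTop (𝓝 0) := hwindow G1 hη_int
  have hlimB : Tendsto B atTop (𝓝 0) := hwindow G2 hη'_int
  have hlim : Tendsto (fun N => 2 * Real.exp c * (A N + B N)) atTop (𝓝 0) := by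
    have := (hlimA.add hlimB).const_mul (2 * Real.exp c)
    simpa using this
  -- main bound
  have hbound : ∀ N : ℝ, 2 ≤ N → -g' N * ‖η N‖ ^ 2 ≤ 2 * Real.exp c * (A N + B N) := by
    intro N hN2
    have hN1 : (0:ℝ) < N - 1 := by linarith
    have hN0 : (0:ℝ) < N := by linarith
    have hIsub : Set.Ioc (N - 1) N ⊆ Set.Ioi (0:ℝ) := fun t ht => lt_trans hN1 ht.1
    have hG1I : IntegrableOn G1 (Set.Ioc (N - 1) N) := hη_int.mono_set hIsub
    have hG2I : IntegrableOn G2 (Set.Ioc (N - 1) N) := hη'_int.mono_set hIsub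
    have hvol : volume (Set.Ioc (N - 1) N) = 1 := by
      rw [Real.volume_Ioc, show N - (N - 1) = (1:ℝ) by ring, ENNReal.ofReal_one]
    have hG1nn : ∀ t ∈ Set.Ioc (N - 1) N, 0 ≤ G1 t := fun t ht =>
      mul_nonneg (neg_nonneg.2 (hg'_nonpos t (hIsub ht))) (sq_nonneg _)
    have hG2nn : ∀ t ∈ Set.Ioc (N - 1) N, 0 ≤ G2 t := fun t ht =>
      mul_nonneg (neg_nonneg.2 (hg'_nonpos t (hIsub ht))) (sq_nonneg _)
    have hANn : 0 ≤ A N := setIntegral_nonneg measurableSet_Ioc hG1nn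
    have hBNn : 0 ≤ B N := setIntegral_nonneg measurableSet_Ioc hG2nn
    have huNn : 0 ≤ -g' N := neg_nonneg.2 (hg'_nonpos N hN0)
    have hcomp : ∀ t ∈ Set.Icc (N - 1) N, -g' N ≤ Real.exp c * -g' t := by
      intro t ht
      have ht0 : 0 < t := lt_of_lt_of_le hN1 ht.1
      have h1 := hgron t N ht0 ht.2
      have h2 : Real.exp (c * (N - t)) ≤ Real.exp c :=
        Real.exp_le_exp.2 (by nlinarith [ht.1])
      have h3 : 0 ≤ -g' t := neg_nonneg.2 (hg'_nonpos t ht0)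
      calc -g' N ≤ -g' t * Real.exp (c * (N - t)) := h1
      _ ≤ -g' t * Real.exp c := mul_le_mul_of_nonneg_left h2 h3
      _ = Real.exp c * -g' t := mul_comm _ _
    rcases huNn.eq_or_lt with hu0 | hu
    · rw [← hu0]
      have : 0 ≤ 2 * Real.exp c * (A N + B N) :=
        mul_nonneg (by positivity) (add_nonneg hANn hBNn)
      linarith
    -- positive case
    have hη'm : IntegrableOn η' (Set.Ioc (N - 1) N) := (hη'loc (N - 1) N hN1 (by linarith)).1
    have haesm : AEStronglyMeasurable η' (volume.restrict (Set.Ioc (N - 1) N)) :=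
      hη'm.aestronglyMeasurable
    have hη'nint : IntegrableOn (fun t => ‖η' t‖) (Set.Ioc (N - 1) N) := hη'm.norm
    have hη'2int : IntegrableOn (fun t => ‖η' t‖ ^ 2) (Set.Ioc (N - 1) N) := by
      apply Integrable.mono' ((hG2I.const_mul (Real.exp c)).div_const (-g' N))
      · have : (fun t => ‖η' t‖ ^ 2) = fun t => ‖η' t‖ * ‖η' t‖ := by
          funext t; ring
        rw [this]
        exact haesm.norm.mul haesm.norm
      · rw [ae_restrict_iff' measurableSet_Ioc]
        apply ae_of_all
        intro t ht
        rw [Real.norm_of_nonneg (sq_nonneg _), le_div_iff₀ hu]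
        have := hcomp t ⟨ht.1.le, ht.2⟩
        simp only [hG2_def]
        nlinarith [sq_nonneg ‖η' t‖]
    have hptwise : ∀ s ∈ Set.Ioc (N - 1) N,
        -g' N * ‖η N‖ ^ 2 ≤ 2 * Real.exp c * G1 s + 2 * Real.exp c * B N := by
      intro s hs
      have hs0 : 0 < s := hIsub hs
      have hsN : s ≤ N := hs.2
      have hftc := hηFTC s N hs0 hsN
      have hnorm : ‖η N - η s‖ ≤ ∫ t in Set.Ioc s N, ‖η' t‖ := by
        rw [hftc]
        calc ‖∫ y in s..N, η' y‖ ≤ ∫ y in s..N, ‖η' y‖ :=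
          intervalIntegral.norm_integral_le_integral_norm hsN
        _ = ∫ t in Set.Ioc s N, ‖η' t‖ := intervalIntegral.integral_of_le hsN
      have hsubI : Set.Ioc s N ⊆ Set.Ioc (N - 1) N := Set.Ioc_subset_Ioc hs.1.le le_rfl
      have hfinsN : volume (Set.Ioc s N) ≠ ⊤ := by
        rw [Real.volume_Ioc]; exact ENNReal.ofReal_ne_top
      have hcs : (∫ t in Set.Ioc s N, ‖η' t‖) ^ 2
          ≤ (volume (Set.Ioc s N)).toReal * ∫ t in Set.Ioc s N, ‖η' t‖ ^ 2 :=
        aux_cs _ _ hfinsN (hη'nint.mono_set hsubI) (hη'2int.mono_set hsubI)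
      have hvolsN : (volume (Set.Ioc s N)).toReal ≤ 1 := by
        rw [Real.volume_Ioc, ENNReal.toReal_ofReal (by linarith)]
        linarith [hs.1]
      have hint2nn : 0 ≤ ∫ t in Set.Ioc s N, ‖η' t‖ ^ 2 :=
        setIntegral_nonneg measurableSet_Ioc fun t _ => sq_nonneg _
      have hw : -g' N * ∫ t in Set.Ioc s N, ‖η' t‖ ^ 2
          ≤ Real.exp c * ∫ t in Set.Ioc s N, G2 t := by
        rw [← integral_const_mul, ← integral_const_mul]
        apply setIntegral_mono_on
        · exact (hη'2int.mono_set hsubI).const_mul _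
        · exact (hG2I.mono_set hsubI).const_mul _
        · exact measurableSet_Ioc
        · intro t ht
          have hcmp := hcomp t ⟨by linarith [hs.1, ht.1], ht.2⟩
          simp only [hG2_def]
          nlinarith [sq_nonneg ‖η' t‖]
      have hBmono : ∫ t in Set.Ioc s N, G2 t ≤ B N := by
        apply setIntegral_mono_set hG2I
        · rw [EventuallyLE, ae_restrict_iff' measurableSet_Ioc]
          exact ae_of_all _ hG2nn
        · exact HasSubset.Subset.eventuallyLE hsubI
      have hb2 : ‖η N‖ ^ 2 ≤ 2 * ‖η s‖ ^ 2 + 2 * ‖η N - η s‖ ^ 2 := by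
        have h0 : ‖η N‖ ≤ ‖η s‖ + ‖η N - η s‖ := by
          calc ‖η N‖ = ‖η s + (η N - η s)‖ := by rw [add_sub_cancel]
          _ ≤ _ := norm_add_le _ _
        nlinarith [norm_nonneg (η s), norm_nonneg (η N - η s), norm_nonneg (η N),
          mul_self_le_mul_self (norm_nonneg (η N)) h0,
          sq_nonneg (‖η s‖ - ‖η N - η s‖)]
      have hterm1 : -g' N * ‖η s‖ ^ 2 ≤ Real.exp c * G1 s := by
        have := hcomp s ⟨hs.1.le, hs.2⟩
        simp only [hG1_def]
        nlinarith [sq_nonneg ‖η s‖]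
      have hterm2 : -g' N * ‖η N - η s‖ ^ 2 ≤ Real.exp c * B N := by
        have h1 : ‖η N - η s‖ ^ 2 ≤ (∫ t in Set.Ioc s N, ‖η' t‖) ^ 2 := by
          nlinarith [hnorm, norm_nonneg (η N - η s)]
        calc -g' N * ‖η N - η s‖ ^ 2
            ≤ -g' N * (∫ t in Set.Ioc s N, ‖η' t‖) ^ 2 :=
              mul_le_mul_of_nonneg_left h1 hu.le
        _ ≤ -g' N * ((volume (Set.Ioc s N)).toReal * ∫ t in Set.Ioc s N, ‖η' t‖ ^ 2) :=
              mul_le_mul_of_nonneg_left hcs hu.le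
        _ ≤ -g' N * (1 * ∫ t in Set.Ioc s N, ‖η' t‖ ^ 2) :=
              mul_le_mul_of_nonneg_left (mul_le_mul_of_nonneg_right hvolsN hint2nn) hu.le
        _ = -g' N * ∫ t in Set.Ioc s N, ‖η' t‖ ^ 2 := by ring
        _ ≤ Real.exp c * ∫ t in Set.Ioc s N, G2 t := hw
        _ ≤ Real.exp c * B N := mul_le_mul_of_nonneg_left hBmono (Real.exp_pos c).le
      calc -g' N * ‖η N‖ ^ 2
          ≤ -g' N * (2 * ‖η s‖ ^ 2 + 2 * ‖η N - η s‖ ^ 2) :=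
            mul_le_mul_of_nonneg_left hb2 hu.le
      _ = 2 * (-g' N * ‖η s‖ ^ 2) + 2 * (-g' N * ‖η N - η s‖ ^ 2) := by ring
      _ ≤ 2 * (Real.exp c * G1 s) + 2 * (Real.exp c * B N) := by linarith
      _ = 2 * Real.exp c * G1 s + 2 * Real.exp c * B N := by ring
    -- averaging over the window
    have hfinI : volume (Set.Ioc (N - 1) N) < ⊤ := by rw [hvol]; exact ENNReal.one_lt_top
    have hconstI : ∀ r : ℝ, ∫ _ in Set.Ioc (N - 1) N, r = r := by
      intro r; rw [setIntegral_const, Measure.real, hvol]; simp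
    have havg : -g' N * ‖η N‖ ^ 2
        ≤ ∫ s in Set.Ioc (N - 1) N, (2 * Real.exp c * G1 s + 2 * Real.exp c * B N) := by
      rw [← hconstI (-g' N * ‖η N‖ ^ 2)]
      apply setIntegral_mono_on
      · exact integrableOn_const hfinI.ne
      · exact (hG1I.const_mul _).add (integrableOn_const hfinI.ne)
      · exact measurableSet_Ioc
      · exact hptwise
    have hrhs : ∫ s in Set.Ioc (N - 1) N, (2 * Real.exp c * G1 s + 2 * Real.exp c * B N)
        = 2 * Real.exp c * A N + 2 * Real.exp c * B N := by
      rw [integral_add (hG1I.const_mul _) (integrableOn_const hfinI.ne),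
        integral_const_mul, hconstI]
    rw [hrhs] at havg
    linarith
  -- squeeze
  have hpos : ∀ᶠ N in atTop, 0 ≤ -g' N * ‖η N‖ ^ 2 := by
    filter_upwards [eventually_ge_atTop (1:ℝ)] with N hN
    exact mul_nonneg (neg_nonneg.2 (hg'_nonpos N (Set.mem_Ioi.2 (by linarith)))) (sq_nonneg _)
  have hble : ∀ᶠ N in atTop, -g' N * ‖η N‖ ^ 2 ≤ 2 * Real.exp c * (A N + B N) := by
    filter_upwards [eventually_ge_atTop (2:ℝ)] with N hN
    exact hbound N hN
  have hmain : Tendsto (fun N => -g' N * ‖η N‖ ^ 2) atTop (𝓝 0) :=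
    squeeze_zero' hpos hble hlim
  have h := hmain.neg
  rw [neg_zero] at h
  apply h.congr
  intro N; ring
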